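/- Let k be a positive integer, n ∈ {1,…,2^{k−1}} and m ∈ ℕ. For every x with (n−1)/2^{k−1} ≤ x ≤ n/2^{k−1}, the first integral of the Taylor wavelet satisfies ∫₀^x ψ_{nm}(τ) dτ = (2^{(m+1/2)(k−1)} √(2m+1) / (m+1)) · (x − (n−1)/2^{k−1})^{m+1}. -/

import Mathlib

open Real intervalIntegral

/-- **First integral of the Taylor wavelet, middle case (Eq. (2.9)).**
For `x` in the support interval `[(n−1)/2^{k−1}, n/2^{k−1}]`,
`∫₀^x ψ_{nm}(τ) dτ = (2^{(m+1/2)(k−1)} √(2m+1)/(m+1)) (x − (n−1)/2^{k−1})^{m+1}`. -/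
theorem taylor_wavelet_first_integral_middle
    (k n m : ℕ) (hk : 0 < k) (hn1 : 1 ≤ n) (hn2 : n ≤ 2 ^ (k - 1))
    (x : ℝ) (hx1 : ((n : ℝ) - 1) / 2 ^ (k - 1) ≤ x) (hx2 : x ≤ (n : ℝ) / 2 ^ (k - 1)) :
    ∫ τ in (0 : ℝ)..x,
        (if ((n : ℝ) - 1) / 2 ^ (k - 1) ≤ τ ∧ τ < (n : ℝ) / 2 ^ (k - 1) then
          (2 : ℝ) ^ (((k : ℝ) - 1) / 2) * Real.sqrt (2 * m + 1) *
            ((2 : ℝ) ^ (k - 1) * τ - n + 1) ^ m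
        else 0)
      = (2 : ℝ) ^ (((m : ℝ) + 1 / 2) * ((k : ℝ) - 1)) * Real.sqrt (2 * m + 1) / ((m : ℝ) + 1) *
          (x - ((n : ℝ) - 1) / 2 ^ (k - 1)) ^ (m + 1) := by
  have hK : (0:ℝ) < 2 ^ (k-1) := by positivity
  set K : ℝ := (2:ℝ)^(k-1) with hKdef
  set a : ℝ := ((n:ℝ)-1)/K with ha
  set b : ℝ := (n:ℝ)/K with hb
  set C : ℝ := (2:ℝ)^(((k:ℝ)-1)/2) * Real.sqrt (2*m+1) with hC
  have hn1' : (1:ℝ) ≤ (n:ℝ) := by exact_mod_cast hn1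
  have ha0 : (0:ℝ) ≤ a := div_nonneg (by linarith) hK.le
  have haea : ∀ᵐ τ : ℝ, τ ≠ a := by
    rw [MeasureTheory.ae_iff]; simpa using Real.volume_singleton
  have haeb : ∀ᵐ τ : ℝ, τ ≠ b := by
    rw [MeasureTheory.ae_iff]; simpa using Real.volume_singleton
  set f : ℝ → ℝ := fun τ => if a ≤ τ ∧ τ < b then C * (K * τ - n + 1)^m else 0 with hf
  set g : ℝ → ℝ := fun τ => C * (K * τ - n + 1)^m with hg
  have hgc : Continuous g := by fun_prop
  have hfg1 : ∀ᵐ τ : ℝ, τ ∈ Set.uIoc (0:ℝ) a → f τ = 0 := by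
    filter_upwards [haea] with τ hτ hmem
    rw [Set.uIoc_of_le ha0] at hmem
    have : ¬ (a ≤ τ ∧ τ < b) := fun h => hτ (le_antisymm hmem.2 h.1)
    simp [hf, this]
  have hfg2 : ∀ᵐ τ : ℝ, τ ∈ Set.uIoc a x → f τ = g τ := by
    filter_upwards [haeb] with τ hτ hmem
    rw [Set.uIoc_of_le hx1] at hmem
    have : a ≤ τ ∧ τ < b := ⟨hmem.1.le, lt_of_le_of_ne (hmem.2.trans hx2) hτ⟩
    simp [hf, hg, this]
  have hint1 : IntervalIntegrable f MeasureTheory.volume 0 a :=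
    (_root_.intervalIntegrable_const (c := (0:ℝ))).congr_ae
      ((MeasureTheory.ae_restrict_iff' measurableSet_uIoc).2 (hfg1.mono fun τ h hm => (h hm).symm))
  have hint2 : IntervalIntegrable f MeasureTheory.volume a x :=
    (hgc.intervalIntegrable a x).congr_ae
      ((MeasureTheory.ae_restrict_iff' measurableSet_uIoc).2 (hfg2.mono fun τ h hm => (h hm).symm))
  have hsplit : ∫ τ in (0:ℝ)..x, f τ = (∫ τ in (0:ℝ)..a, f τ) + ∫ τ in a..x, f τ :=
    (integral_add_adjacent_intervals hint1 hint2).symm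
  have h1 : ∫ τ in (0:ℝ)..a, f τ = 0 := by
    rw [integral_congr_ae hfg1]; simp
  have h2 : ∫ τ in a..x, f τ = ∫ τ in a..x, g τ := integral_congr_ae hfg2
  have h3 : ∫ τ in a..x, g τ = C * (K⁻¹ * ((K*(x-a))^(m+1) / (m+1))) := by
    rw [hg]
    rw [integral_const_mul]
    have : ∀ τ : ℝ, (K * τ - n + 1)^m = (fun y : ℝ => y ^ m) (K * τ + (1 - n)) := by
      intro τ; ring_nf
    simp only [this]
    rw [intervalIntegral.integral_comp_mul_add (fun y : ℝ => y ^ m) hK.ne' (1 - n)]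
    have e1 : K * a + (1 - (n:ℝ)) = 0 := by
      rw [ha]; field_simp; ring
    have e2 : K * x + (1 - (n:ℝ)) = K * (x - a) := by
      rw [ha]; field_simp; ring
    rw [e1, e2, integral_pow]
    simp only [smul_eq_mul]
    push_cast
    ring
  rw [hsplit, h1, h2, h3, zero_add]
  -- now pure algebra
  have hxa : K * (x - a) = K * (x - a) := rfl
  have hKm : K ^ (m+1) = (2:ℝ) ^ (((k:ℝ)-1) * (m+1)) := by
    have hk1 : ((k - 1 : ℕ) : ℝ) = (k:ℝ) - 1 := by
      push_cast [Nat.cast_sub hk]; ring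
    rw [hKdef, ← Real.rpow_natCast ((2:ℝ)^(k-1)) (m+1), ← Real.rpow_natCast (2:ℝ) (k-1), hk1,
      ← Real.rpow_mul (by norm_num)]
    push_cast; ring_nf
  rw [mul_pow, hKm]
  have hCK : C * (K⁻¹ * ((2:ℝ) ^ (((k:ℝ)-1) * (m+1))))
      = (2:ℝ) ^ (((m:ℝ) + 1/2) * ((k:ℝ)-1)) * Real.sqrt (2*m+1) := by
    have hk1 : ((k - 1 : ℕ) : ℝ) = (k:ℝ) - 1 := by
      push_cast [Nat.cast_sub hk]; ring
    rw [hC, hKdef, ← Real.rpow_natCast (2:ℝ) (k-1), hk1]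
    rw [← Real.rpow_neg (by norm_num : (0:ℝ) ≤ 2)]
    rw [show (2:ℝ) ^ (((k:ℝ)-1)/2) * Real.sqrt (2*m+1) * ((2:ℝ)^(-((k:ℝ)-1)) * (2:ℝ)^(((k:ℝ)-1)*(m+1)))
        = (2:ℝ) ^ (((k:ℝ)-1)/2) * (2:ℝ)^(-((k:ℝ)-1)) * (2:ℝ)^(((k:ℝ)-1)*(m+1)) * Real.sqrt (2*m+1) by ring]
    rw [← Real.rpow_add (by norm_num), ← Real.rpow_add (by norm_num)]
    ring_nf
  calc C * (K⁻¹ * ((2:ℝ) ^ (((k:ℝ)-1) * (m+1)) * (x-a)^(m+1) / (m+1)))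
      = C * (K⁻¹ * ((2:ℝ) ^ (((k:ℝ)-1) * (m+1)))) * (x-a)^(m+1) / (m+1) := by ring
    _ = _ := by rw [hCK]; ring
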